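/- For every integer j ≥ 3, the inequality 10/(10·k_j + 12 + 5(j−1)(j+3)) < 630·j^{3/2}/(315·j^{3/2}(j+1)² − 504·j^{3/2} + 80·√15) holds, where k_3 = 11/40, k_4 = 5/26, k_5 = 23/130, and k_j = (8/63)·√(15/(2j−1)) for j ≥ 6. -/
import Mathlib


open Real

lemma mul_sqrt_lt_mul_sqrt_aux {a b u v : ℝ} (ha : 0 ≤ a) (hb : 0 ≤ b) (hu : 0 ≤ u)
    (h : a ^ 2 * u < b ^ 2 * v) : a * Real.sqrt u < b * Real.sqrt v := by
  have h1 : a * Real.sqrt u = Real.sqrt (a ^ 2 * u) := by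
    rw [Real.sqrt_mul (by positivity), Real.sqrt_sq ha]
  have h2 : b * Real.sqrt v = Real.sqrt (b ^ 2 * v) := by
    rw [Real.sqrt_mul (by positivity), Real.sqrt_sq hb]
  rw [h1, h2]
  exact Real.sqrt_lt_sqrt (by positivity) h

lemma rpow_three_half (j : ℕ) : (j : ℝ) ^ ((3 : ℝ) / 2) = Real.sqrt ((j : ℝ) ^ 3) := by
  rw [Real.sqrt_eq_rpow, ← Real.rpow_natCast (j : ℝ) 3,
    ← Real.rpow_mul (by positivity)]
  norm_num

/-- Feng's exponent is smaller than the new exponent of Theorem 1.1, for all `j ≥ 3`. -/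
theorem exponent_comparison_feng (k : ℕ → ℝ)
    (hk3 : k 3 = 11 / 40) (hk4 : k 4 = 5 / 26) (hk5 : k 5 = 23 / 130)
    (hk : ∀ j : ℕ, 6 ≤ j → k j = (8 / 63) * Real.sqrt (15 / (2 * (j : ℝ) - 1)))
    (j : ℕ) (hj : 3 ≤ j) :
    10 / (10 * k j + 12 + 5 * ((j : ℝ) - 1) * ((j : ℝ) + 3)) <
      630 * (j : ℝ) ^ ((3 : ℝ) / 2) /
        (315 * (j : ℝ) ^ ((3 : ℝ) / 2) * ((j : ℝ) + 1) ^ 2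
          - 504 * (j : ℝ) ^ ((3 : ℝ) / 2) + 80 * Real.sqrt 15) := by
  have hj3 : (3 : ℝ) ≤ (j : ℝ) := by exact_mod_cast hj
  set x : ℝ := (j : ℝ) ^ ((3 : ℝ) / 2) with hxdef
  have hxs : x = Real.sqrt ((j : ℝ) ^ 3) := rpow_three_half j
  have hxpos : 0 < x := by
    rw [hxs]
    have : (0 : ℝ) < (j : ℝ) ^ 3 := by positivity
    exact Real.sqrt_pos.mpr this
  -- key inequality : 80 √15 < 630 x (k j)
  have key : 80 * Real.sqrt 15 < 630 * x * k j := by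
    rcases lt_or_ge j 6 with h6 | h6
    · interval_cases j
      · rw [hk3, hxs]
        have h := mul_sqrt_lt_mul_sqrt_aux (a := 80) (b := 630 * (11 / 40))
          (u := 15) (v := ((3 : ℕ) : ℝ) ^ 3) (by norm_num) (by norm_num) (by norm_num)
          (by norm_num)
        nlinarith [h]
      · rw [hk4, hxs]
        have h := mul_sqrt_lt_mul_sqrt_aux (a := 80) (b := 630 * (5 / 26))
          (u := 15) (v := ((4 : ℕ) : ℝ) ^ 3) (by norm_num) (by norm_num) (by norm_num)
          (by norm_num)
        nlinarith [h]
      · rw [hk5, hxs]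
        have h := mul_sqrt_lt_mul_sqrt_aux (a := 80) (b := 630 * (23 / 130))
          (u := 15) (v := ((5 : ℕ) : ℝ) ^ 3) (by norm_num) (by norm_num) (by norm_num)
          (by norm_num)
        nlinarith [h]
    · have hj6 : (6 : ℝ) ≤ (j : ℝ) := by exact_mod_cast h6
      rw [hk j h6, hxs]
      have hden : (0 : ℝ) < 2 * (j : ℝ) - 1 := by linarith
      have h := mul_sqrt_lt_mul_sqrt_aux (a := 1) (b := Real.sqrt ((j : ℝ) ^ 3))
        (u := 15) (v := 15 / (2 * (j : ℝ) - 1)) zero_le_one (Real.sqrt_nonneg _)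
        (by norm_num) ?_
      · nlinarith [h, Real.sqrt_nonneg (15 / (2 * (j : ℝ) - 1))]
      · have e : ((j : ℝ)) ^ 3 * (15 / (2 * (j : ℝ) - 1)) =
            15 * (j : ℝ) ^ 3 / (2 * (j : ℝ) - 1) := by ring
        rw [Real.sq_sqrt (by positivity), one_pow, one_mul, e, lt_div_iff₀ hden]
        nlinarith [hj6, mul_nonneg (by linarith : (0:ℝ) ≤ (j : ℝ) - 6) (sq_nonneg (j : ℝ))]
  have hs15 : 0 < Real.sqrt 15 := Real.sqrt_pos.mpr (by norm_num)
  have hkpos : 0 < k j := by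
    by_contra h
    push_neg at h
    nlinarith [key]
  have hD1 : 0 < 10 * k j + 12 + 5 * ((j : ℝ) - 1) * ((j : ℝ) + 3) := by nlinarith
  have hD2 : 0 < 315 * x * ((j : ℝ) + 1) ^ 2 - 504 * x + 80 * Real.sqrt 15 := by
    have h1 : 0 ≤ x * (((j : ℝ) - 3) * ((j : ℝ) + 5)) :=
      mul_nonneg hxpos.le (by nlinarith)
    nlinarith [h1, hxpos, hs15]
  rw [div_lt_div_iff₀ hD1 hD2]
  nlinarith [key]
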